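/- (Monotone likelihood ratio of symmetric two-point Gaussian mixtures.) Let φ(x) = (2π)^{-1/2} exp(-x²/2) denote the standard normal density and let 0 ≤ μ₁ ≤ μ₂. Then the ratio z ↦ (φ(z - μ₂) + φ(z + μ₂)) / (φ(z - μ₁) + φ(z + μ₁)) is non-decreasing on [0, ∞) and non-increasing on (-∞, 0]. -/

import Mathlib

noncomputable section

/-- The standard normal density `φ(x) = (2π)^{-1/2} exp(-x²/2)`. -/
def stdNormal (x : ℝ) : ℝ := (Real.sqrt (2 * Real.pi))⁻¹ * Real.exp (-(x ^ 2) / 2)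

end

lemma stdNormal_mix_eq (z μ : ℝ) :
    stdNormal (z - μ) + stdNormal (z + μ) =
      (Real.sqrt (2 * Real.pi))⁻¹ * Real.exp (-(z ^ 2 + μ ^ 2) / 2) *
        (2 * Real.cosh (z * μ)) := by
  unfold stdNormal
  rw [Real.cosh_eq, show -((z - μ) ^ 2) / 2 = -(z ^ 2 + μ ^ 2) / 2 + z * μ by ring,
    show -((z + μ) ^ 2) / 2 = -(z ^ 2 + μ ^ 2) / 2 + -(z * μ) by ring,
    Real.exp_add, Real.exp_add]
  ring

lemma cosh_key (μ₁ μ₂ a b : ℝ) (h1 : 0 ≤ μ₁) (h12 : μ₁ ≤ μ₂) (ha : 0 ≤ a) (hab : a ≤ b) :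
    Real.cosh (a * μ₂) * Real.cosh (b * μ₁) ≤ Real.cosh (b * μ₂) * Real.cosh (a * μ₁) := by
  have prod : ∀ x y : ℝ,
      Real.cosh x * Real.cosh y = (Real.cosh (x + y) + Real.cosh (x - y)) / 2 := by
    intro x y; rw [Real.cosh_add, Real.cosh_sub]; ring
  rw [prod, prod]
  have hA : Real.cosh (a * μ₂ + b * μ₁) ≤ Real.cosh (b * μ₂ + a * μ₁) := by
    rw [Real.cosh_le_cosh, abs_of_nonneg (by nlinarith), abs_of_nonneg (by nlinarith)]
    nlinarith
  have hB : Real.cosh (a * μ₂ - b * μ₁) ≤ Real.cosh (b * μ₂ - a * μ₁) := by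
    rw [Real.cosh_le_cosh]
    exact abs_le_abs (by nlinarith) (by nlinarith)
  linarith

lemma ratio_eq (μ₁ μ₂ z : ℝ) :
    (stdNormal (z - μ₂) + stdNormal (z + μ₂)) / (stdNormal (z - μ₁) + stdNormal (z + μ₁)) =
      Real.exp ((μ₁ ^ 2 - μ₂ ^ 2) / 2) * (Real.cosh (z * μ₂) / Real.cosh (z * μ₁)) := by
  rw [stdNormal_mix_eq, stdNormal_mix_eq]
  have hc1 : (0:ℝ) < Real.cosh (z * μ₁) := Real.cosh_pos _
  have hs : (0:ℝ) < Real.sqrt (2 * Real.pi) :=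
    Real.sqrt_pos.2 (by positivity)
  have he : ∀ x : ℝ, Real.exp x ≠ 0 := fun x => (Real.exp_pos x).ne'
  field_simp
  rw [← Real.exp_add]; congr 1; ring

theorem gaussian_symmetric_mixture_mlr (μ₁ μ₂ : ℝ) (h1 : 0 ≤ μ₁) (h12 : μ₁ ≤ μ₂) :
    MonotoneOn (fun z => (stdNormal (z - μ₂) + stdNormal (z + μ₂)) /
      (stdNormal (z - μ₁) + stdNormal (z + μ₁))) (Set.Ici (0 : ℝ)) ∧
    AntitoneOn (fun z => (stdNormal (z - μ₂) + stdNormal (z + μ₂)) /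
      (stdNormal (z - μ₁) + stdNormal (z + μ₁))) (Set.Iic (0 : ℝ)) := by
  set f : ℝ → ℝ := fun z => (stdNormal (z - μ₂) + stdNormal (z + μ₂)) /
      (stdNormal (z - μ₁) + stdNormal (z + μ₁)) with hf
  have heven : ∀ z, f (-z) = f z := by
    intro z
    have h : ∀ x μ : ℝ, stdNormal (-x - μ) + stdNormal (-x + μ) =
        stdNormal (x - μ) + stdNormal (x + μ) := by
      intro x μ
      unfold stdNormal
      rw [show -((-x - μ) ^ 2) = -((x + μ) ^ 2) by ring,
        show -((-x + μ) ^ 2) = -((x - μ) ^ 2) by ring]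
      ring
    simp only [hf, h]
  have hmono : MonotoneOn f (Set.Ici (0 : ℝ)) := by
    intro a ha b _ hab
    rw [hf]
    simp only
    rw [ratio_eq, ratio_eq]
    have hE : (0:ℝ) < Real.exp ((μ₁ ^ 2 - μ₂ ^ 2) / 2) := Real.exp_pos _
    refine mul_le_mul_of_nonneg_left ?_ hE.le
    rw [div_le_div_iff₀ (Real.cosh_pos _) (Real.cosh_pos _)]
    exact cosh_key μ₁ μ₂ a b h1 h12 ha hab
  refine ⟨hmono, ?_⟩
  intro a ha b hb hab
  have := hmono (Set.mem_Ici.2 (by linarith [Set.mem_Iic.1 hb] : (0:ℝ) ≤ -b))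
    (Set.mem_Ici.2 (by linarith [Set.mem_Iic.1 ha] : (0:ℝ) ≤ -a)) (by linarith)
  rw [heven, heven] at this
  exact this
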